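/- Let n = 4. Suppose the parameter collection c satisfies: (i) for all i ≠ j in {1,2,3,4}, writing {k,l} = {1,2,3,4} \ {i,j}, one has c_j^{ik} c_i^{jl} ≠ c_j^{il} c_i^{jk}; and (ii) the four inequalities c_2^{14}c_4^{13}c_3^{12} ≠ c_4^{12}c_3^{14}c_2^{13}, c_4^{21}c_3^{24}c_1^{23} ≠ c_1^{24}c_4^{23}c_3^{21}, c_4^{31}c_2^{34}c_1^{32} ≠ c_1^{34}c_4^{32}c_2^{31}, and c_2^{41}c_1^{43}c_3^{42} ≠ c_1^{42}c_3^{41}c_2^{43} hold. Then there exists T > 0 such that for every t ∈ (0,T), the singular part Σ_sing(tc) is empty; that is, for every ξ ∈ ℝ^4 \ {0} one has rank P(ξ, tc) ≥ 3 (so the characteristic variety Σ(tc) is smooth). -/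
import Mathlib


open Matrix

/-- A parameter collection: `c i k j` denotes `c_i^{kj}`, symmetric in the two
superscripts, with normalizations `c_i^{ii} = 1` and `c_i^{jj} = 0` for `i ≠ j`. -/
def IsParamColl (n : ℕ) (c : Fin n → Fin n → Fin n → ℝ) : Prop :=
  (∀ i j k : Fin n, j ≠ k → c i k j = c i j k) ∧
  (∀ i : Fin n, c i i i = 1) ∧
  (∀ i j : Fin n, i ≠ j → c i j j = 0)

/-- The principal symbol `P(ξ, c) = Σ_k ξ_k A^k`, where `(A^k)_{ij} = c_i^{kj}`. -/
def pSymb {n : ℕ} (ξ : Fin n → ℝ) (c : Fin n → Fin n → Fin n → ℝ) :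
    Matrix (Fin n) (Fin n) ℝ :=
  Matrix.of fun i j => ∑ k, ξ k * c i k j

/-- The scaled parameter collection `t • c` (normalized entries unchanged). -/
def pScale {n : ℕ} (t : ℝ) (c : Fin n → Fin n → Fin n → ℝ) :
    Fin n → Fin n → Fin n → ℝ :=
  fun i k j => if k = j then c i k j else t * c i k j

namespace Stmt4Aux

/-- selecting columns does not increase rank -/
lemma rank_subcol {m n n' : Type*} [Fintype m] [Fintype n] [Fintype n']
    (A : Matrix m n ℝ) (g : n' → n) : (A.submatrix id g).rank ≤ A.rank := by
  rw [Matrix.rank_eq_finrank_span_cols, Matrix.rank_eq_finrank_span_cols]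
  apply Submodule.finrank_mono
  apply Submodule.span_mono
  rintro v ⟨i, rfl⟩
  exact ⟨g i, rfl⟩

lemma rank_sub_le {m n m' n' : Type*} [Fintype m] [Fintype n] [Fintype m'] [Fintype n']
    (A : Matrix m n ℝ) (f : m' → m) (g : n' → n) : (A.submatrix f g).rank ≤ A.rank := by
  have h1 : (A.submatrix f g) = (A.submatrix f id).submatrix id g := by
    ext i j; simp [Matrix.submatrix_apply]
  rw [h1]
  refine (rank_subcol _ g).trans ?_
  have h2 : (A.submatrix f id) = ((Aᵀ.submatrix id f)ᵀ) := by
    ext i j; simp [Matrix.submatrix_apply]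
  rw [h2, Matrix.rank_transpose]
  refine (rank_subcol _ f).trans ?_
  rw [Matrix.rank_transpose]

def minorExpr (M : Fin 4 → Fin 4 → ℝ) (r0 r1 r2 c0 c1 c2 : Fin 4) : ℝ :=
  M r0 c0 * M r1 c1 * M r2 c2 - M r0 c0 * M r1 c2 * M r2 c1
  - M r0 c1 * M r1 c0 * M r2 c2 + M r0 c1 * M r1 c2 * M r2 c0
  + M r0 c2 * M r1 c0 * M r2 c1 - M r0 c2 * M r1 c1 * M r2 c0

lemma minor_eq_zero {M : Matrix (Fin 4) (Fin 4) ℝ} (h : M.rank ≤ 2)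
    (r0 r1 r2 c0 c1 c2 : Fin 4) :
    minorExpr (fun i j => M i j) r0 r1 r2 c0 c1 c2 = 0 := by
  by_contra hne
  set N : Matrix (Fin 3) (Fin 3) ℝ := M.submatrix ![r0, r1, r2] ![c0, c1, c2] with hN
  have hdet : N.det = minorExpr (fun i j => M i j) r0 r1 r2 c0 c1 c2 := by
    rw [Matrix.det_fin_three]
    simp [hN, minorExpr, Matrix.submatrix_apply]
  have hu : IsUnit N := by
    rw [Matrix.isUnit_iff_isUnit_det]
    exact isUnit_iff_ne_zero.mpr (hdet ▸ hne)
  have h3 : N.rank = 3 := by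
    rw [Matrix.rank_of_isUnit N hu]; simp
  have hle := rank_sub_le M ![r0, r1, r2] ![c0, c1, c2]
  rw [← hN] at hle
  omega

lemma rank_smul_eq (a : ℝ) (ha : a ≠ 0) (A : Matrix (Fin 4) (Fin 4) ℝ) :
    (a • A).rank = A.rank := by
  have h1 : a • A = (a • (1 : Matrix (Fin 4) (Fin 4) ℝ)) * A := by
    rw [Matrix.smul_mul, Matrix.one_mul]
  rw [h1]
  apply Matrix.rank_mul_eq_right_of_isUnit_det
  rw [Matrix.det_smul, Matrix.det_one]
  simp only [mul_one]
  exact (pow_ne_zero 4 ha).isUnit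



/-- the lower-order coefficient matrix -/
def bE (x : Fin 4 → ℝ) (c : Fin 4 → Fin 4 → Fin 4 → ℝ) (i j : Fin 4) : ℝ :=
  ∑ k, if k = j then 0 else x k * c i k j

/-- matrix entries in split form -/
def ME (x : Fin 4 → ℝ) (c : Fin 4 → Fin 4 → Fin 4 → ℝ) (t : ℝ) (i j : Fin 4) : ℝ :=
  (if i = j then x i else 0) + t * bE x c i j

lemma quad_cover' (a b e d : Fin 4) (hab : a ≠ b) (hae : a ≠ e) (had : a ≠ d)
    (hbe : b ≠ e) (hbd : b ≠ d) (hed : e ≠ d) :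
    ({a, b, e, d} : Finset (Fin 4)) = Finset.univ := by
  revert hab hae had hbe hbd hed
  revert a b e d
  decide

lemma sum_univ_four_perm (f : Fin 4 → ℝ) (a b e d : Fin 4)
    (hab : a ≠ b) (hae : a ≠ e) (had : a ≠ d)
    (hbe : b ≠ e) (hbd : b ≠ d) (hed : e ≠ d) :
    ∑ k, f k = f a + f b + f e + f d := by
  classical
  rw [← quad_cover' a b e d hab hae had hbe hbd hed]
  rw [show ({a, b, e, d} : Finset (Fin 4)) = insert a (insert b (insert e ({d} : Finset (Fin 4)))) from rfl]
  rw [Finset.sum_insert (by simp [hab, hae, had]),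
      Finset.sum_insert (by simp [hbe, hbd]),
      Finset.sum_insert (by simp [hed]), Finset.sum_singleton]
  ring

lemma bE_expand (x : Fin 4 → ℝ) (c : Fin 4 → Fin 4 → Fin 4 → ℝ) (i : Fin 4)
    (j k1 k2 k3 : Fin 4) (h1 : j ≠ k1) (h2 : j ≠ k2) (h3 : j ≠ k3)
    (h4 : k1 ≠ k2) (h5 : k1 ≠ k3) (h6 : k2 ≠ k3) :
    bE x c i j = x k1 * c i k1 j + x k2 * c i k2 j + x k3 * c i k3 j := by
  unfold bE
  rw [sum_univ_four_perm _ j k1 k2 k3 h1 h2 h3 h4 h5 h6]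
  simp [h1.symm, h2.symm, h3.symm]

lemma entry_eq {c : Fin 4 → Fin 4 → Fin 4 → ℝ} (hc : IsParamColl 4 c)
    (x : Fin 4 → ℝ) (t : ℝ) (i j : Fin 4) :
    pSymb x (pScale t c) i j = ME x c t i j := by
  obtain ⟨hsym, hone, hzero⟩ := hc
  show (∑ k, x k * pScale t c i k j) = _
  have hterm : ∀ k : Fin 4, x k * pScale t c i k j
      = (if k = j then x j * c i j j else 0) + t * (if k = j then 0 else x k * c i k j) := by
    intro k
    unfold pScale
    by_cases h : k = j
    · subst h; simp
    · simp [h]; ring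
  rw [Finset.sum_congr rfl (fun k _ => hterm k), Finset.sum_add_distrib]
  rw [Finset.sum_ite_eq' Finset.univ j (fun k => x j * c i j j)]
  rw [← Finset.mul_sum]
  simp only [Finset.mem_univ, if_true]
  unfold ME bE
  congr 1
  by_cases h : i = j
  · subst h; rw [hone i]; simp
  · rw [hzero i j h]; simp [h]

lemma abs_nn {a A : ℝ} (h : |a| ≤ A) : 0 ≤ A := (abs_nonneg a).trans h

lemma amul {a b A B : ℝ} (ha : |a| ≤ A) (hb : |b| ≤ B) : |a * b| ≤ A * B := by
  rw [abs_mul]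
  exact mul_le_mul ha hb (abs_nonneg b) (abs_nn ha)

lemma aadd {a b A B : ℝ} (ha : |a| ≤ A) (hb : |b| ≤ B) : |a + b| ≤ A + B :=
  (abs_add_le a b).trans (add_le_add ha hb)

lemma asub {a b A B : ℝ} (ha : |a| ≤ A) (hb : |b| ≤ B) : |a - b| ≤ A + B :=
  (abs_sub a b).trans (add_le_add ha hb)

lemma amul3 {a b e A B E : ℝ} (ha : |a| ≤ A) (hb : |b| ≤ B) (he : |e| ≤ E) :
    |a * b * e| ≤ A * B * E := amul (amul ha hb) he

/-- bound on bE entries -/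
lemma bE_bound {x : Fin 4 → ℝ} {c : Fin 4 → Fin 4 → Fin 4 → ℝ} {K : ℝ}
    (hx : ∀ k, |x k| ≤ 1) (hK : ∀ i k j, |c i k j| ≤ K) (i j : Fin 4) :
    |bE x c i j| ≤ 3 * K := by
  have hK0 : 0 ≤ K := abs_nn (hK 0 0 0)
  unfold bE
  refine (Finset.abs_sum_le_sum_abs _ _).trans ?_
  have hbd : ∀ k : Fin 4, |if k = j then (0:ℝ) else x k * c i k j| ≤ if k = j then 0 else K := by
    intro k
    by_cases h : k = j
    · simp [h]
    · simp only [h, if_false]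
      calc |x k * c i k j| ≤ 1 * K := amul (hx k) (hK i k j)
        _ = K := one_mul K
  refine (Finset.sum_le_sum (fun k _ => hbd k)).trans ?_
  have : (∑ k : Fin 4, if k = j then (0:ℝ) else K) = 3 * K := by
    fin_cases j <;> simp [Fin.sum_univ_four] <;> ring
  rw [this]

/-- bound on bE in the pivot column, when off-pivot entries are ≤ η -/
lemma bE_bound_col {x : Fin 4 → ℝ} {c : Fin 4 → Fin 4 → Fin 4 → ℝ} {K η : ℝ} {p : Fin 4}
    (hη : 0 ≤ η) (hsm : ∀ k, k ≠ p → |x k| ≤ η) (hK : ∀ i k j, |c i k j| ≤ K)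
    (i : Fin 4) :
    |bE x c i p| ≤ 3 * K * η := by
  have hK0 : 0 ≤ K := abs_nn (hK 0 0 0)
  unfold bE
  refine (Finset.abs_sum_le_sum_abs _ _).trans ?_
  have hbd : ∀ k : Fin 4, |if k = p then (0:ℝ) else x k * c i k p| ≤ if k = p then 0 else η * K := by
    intro k
    by_cases h : k = p
    · simp [h]
    · simp only [h, if_false]
      exact amul (hsm k h) (hK i k p)
  refine (Finset.sum_le_sum (fun k _ => hbd k)).trans ?_
  have : (∑ k : Fin 4, if k = p then (0:ℝ) else η * K) = 3 * (η * K) := by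
    fin_cases p <;> simp [Fin.sum_univ_four] <;> ring
  rw [this]; ring_nf; rfl


/-- The common estimate extracted from a vanishing 3×3 minor with two large
diagonal entries `dp, da`. -/
lemma stepDiag {dp da du o1 o2 o3 o4 o5 o6 w η : ℝ}
    (E : dp * da * du = dp*o1*o2 + o3*o4*du - o3*o1*o5 - o6*o4*o2 + o6*da*o5)
    (hdp1 : 1/2 ≤ |dp|) (hda1 : η/2 ≤ |da|)
    (hdp2 : |dp| ≤ 2) (hda2 : |da| ≤ 2) (hdu2 : |du| ≤ 2)
    (h1 : |o1| ≤ w) (h2 : |o2| ≤ w) (h3 : |o3| ≤ w) (h4 : |o4| ≤ w)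
    (h5 : |o5| ≤ w) (h6 : |o6| ≤ w)
    (hw1 : w ≤ 1/2) (hη : 0 < η) :
    η * |du| ≤ 28 * w^2 := by
  have hw0 : 0 ≤ w := abs_nn h1
  have hR : |dp*o1*o2 + o3*o4*du - o3*o1*o5 - o6*o4*o2 + o6*da*o5|
      ≤ 2*w*w + w*w*2 + w*w*w + w*w*w + w*2*w :=
    aadd (asub (asub (aadd (amul3 hdp2 h1 h2) (amul3 h3 h4 hdu2))
      (amul3 h3 h1 h5)) (amul3 h6 h4 h2)) (amul3 h6 hda2 h5)
  have hL : 1/2 * (η/2) * |du| ≤ |dp * da * du| := by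
    rw [abs_mul, abs_mul]
    have hpa : 1/2 * (η/2) ≤ |dp| * |da| :=
      mul_le_mul hdp1 hda1 (by linarith) (abs_nonneg dp)
    exact mul_le_mul_of_nonneg_right hpa (abs_nonneg du)
  rw [E] at hL
  have hcube : w*w*w ≤ 1/2*(w*w) := by nlinarith
  nlinarith [abs_nonneg du]

set_option maxHeartbeats 1000000 in
lemma caseA {c : Fin 4 → Fin 4 → Fin 4 → ℝ} {K t η Dm : ℝ}
    (hK1 : 1 ≤ K) (hK : ∀ i k j, |c i k j| ≤ K)
    {p a u v : Fin 4} (hpa : p ≠ a) (hpu : p ≠ u) (hpv : p ≠ v)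
    (hau : a ≠ u) (hav : a ≠ v) (huv : u ≠ v)
    {x : Fin 4 → ℝ} (hxp : x p = 1) (hx : ∀ k, |x k| ≤ 1) (hηa : η ≤ |x a|)
    (hDm : Dm ≤ |c u p v * c v a u - c v p u * c u a v|)
    (hη0 : 0 < η) (hη1 : η ≤ 1) (ht0 : 0 < t) (ht1 : 6*K*t ≤ 1) (ht2 : 6*K*t ≤ η)
    (ht3 : 600*K^3*t < η*Dm)
    (hm : ∀ r0 r1 r2 c0 c1 c2, minorExpr (ME x c t) r0 r1 r2 c0 c1 c2 = 0) : False := by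
  have hK0 : (0:ℝ) < K := lt_of_lt_of_le one_pos hK1
  have hB : ∀ i j, |bE x c i j| ≤ 3*K := bE_bound hx hK
  have hO : ∀ i j, |t * bE x c i j| ≤ 3*K*t := by
    intro i j
    calc |t * bE x c i j| = t * |bE x c i j| := by rw [abs_mul, abs_of_nonneg ht0.le]
      _ ≤ t * (3*K) := mul_le_mul_of_nonneg_left (hB i j) ht0.le
      _ = 3*K*t := by ring
  have hw1 : 3*K*t ≤ 1/2 := by linarith
  have habs1 : ∀ y B : ℝ, |y| ≤ |y + B| + |B| := by
    intro y B
    have h := abs_sub (y + B) B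
    simpa using h
  -- diagonal entries
  have hdp1 : 1/2 ≤ |1 + t * bE x c p p| := by
    have h := habs1 1 (t * bE x c p p)
    have := hO p p
    simp only [abs_one] at h
    linarith
  have hda1 : η/2 ≤ |x a + t * bE x c a a| := by
    have h := habs1 (x a) (t * bE x c a a)
    have := hO a a
    linarith
  have hd2 : ∀ y : Fin 4, |x y + t * bE x c y y| ≤ 2 := by
    intro y
    have := aadd (hx y) (hO y y)
    linarith
  have hdp2 : |1 + t * bE x c p p| ≤ 2 := by
    have : |(1:ℝ)| ≤ 1 := by simp
    have := aadd this (hO p p)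
    linarith
  -- minor equations
  have e1 := hm p a u p a u
  have e2 := hm p a v p a v
  have e3 := hm p a u p a v
  have e4 := hm p a v p a u
  simp only [minorExpr, ME, if_neg hpa, if_neg hpu, if_neg hpv,
    if_neg hau, if_neg hav, if_neg huv, if_neg (Ne.symm hpa), if_neg (Ne.symm hpu),
    if_neg (Ne.symm hpv), if_neg (Ne.symm hau), if_neg (Ne.symm hav),
    if_neg (Ne.symm huv), eq_self_iff_true, if_true, hxp, zero_add] at e1 e2 e3 e4
  -- step for u
  have E1 : (1 + t * bE x c p p) * (x a + t * bE x c a a) * (x u + t * bE x c u u)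
      = (1 + t * bE x c p p)*(t * bE x c a u)*(t * bE x c u a)
        + (t * bE x c p a)*(t * bE x c a p)*(x u + t * bE x c u u)
        - (t * bE x c p a)*(t * bE x c a u)*(t * bE x c u p)
        - (t * bE x c p u)*(t * bE x c a p)*(t * bE x c u a)
        + (t * bE x c p u)*(x a + t * bE x c a a)*(t * bE x c u p) := by
    linear_combination e1
  have S1 := stepDiag E1 hdp1 hda1 hdp2 (hd2 a) (hd2 u)
    (hO a u) (hO u a) (hO p a) (hO a p) (hO u p) (hO p u) hw1 hη0
  have E2 : (1 + t * bE x c p p) * (x a + t * bE x c a a) * (x v + t * bE x c v v)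
      = (1 + t * bE x c p p)*(t * bE x c a v)*(t * bE x c v a)
        + (t * bE x c p a)*(t * bE x c a p)*(x v + t * bE x c v v)
        - (t * bE x c p a)*(t * bE x c a v)*(t * bE x c v p)
        - (t * bE x c p v)*(t * bE x c a p)*(t * bE x c v a)
        + (t * bE x c p v)*(x a + t * bE x c a a)*(t * bE x c v p) := by
    linear_combination e2
  have S2 := stepDiag E2 hdp1 hda1 hdp2 (hd2 a) (hd2 v)
    (hO a v) (hO v a) (hO p a) (hO a p) (hO v p) (hO p v) hw1 hη0
  -- cross minors
  have E3 : (1 + t * bE x c p p) * (x a + t * bE x c a a) * (t * bE x c u v)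
      = (1 + t * bE x c p p)*(t * bE x c a v)*(t * bE x c u a)
        + (t * bE x c p a)*(t * bE x c a p)*(t * bE x c u v)
        - (t * bE x c p a)*(t * bE x c a v)*(t * bE x c u p)
        - (t * bE x c p v)*(t * bE x c a p)*(t * bE x c u a)
        + (t * bE x c p v)*(x a + t * bE x c a a)*(t * bE x c u p) := by
    linear_combination e3
  have S3 := stepDiag E3 hdp1 hda1 hdp2 (hd2 a) ((hO u v).trans (by linarith))
    (hO a v) (hO u a) (hO p a) (hO a p) (hO u p) (hO p v) hw1 hη0
  have E4 : (1 + t * bE x c p p) * (x a + t * bE x c a a) * (t * bE x c v u)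
      = (1 + t * bE x c p p)*(t * bE x c a u)*(t * bE x c v a)
        + (t * bE x c p a)*(t * bE x c a p)*(t * bE x c v u)
        - (t * bE x c p a)*(t * bE x c a u)*(t * bE x c v p)
        - (t * bE x c p u)*(t * bE x c a p)*(t * bE x c v a)
        + (t * bE x c p u)*(x a + t * bE x c a a)*(t * bE x c v p) := by
    linear_combination e4
  have S4 := stepDiag E4 hdp1 hda1 hdp2 (hd2 a) ((hO v u).trans (by linarith))
    (hO a u) (hO v a) (hO p a) (hO a p) (hO v p) (hO p u) hw1 hη0
  clear e1 e2 e3 e4 E1 E2 E3 E4 hm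
  -- |x u|, |x v| small
  have hsmallstep : ∀ y : Fin 4, η * |x y + t * bE x c y y| ≤ 28*(3*K*t)^2 →
      η * |x y| ≤ 28*(3*K*t)^2 + 3*K*t*η := by
    intro y hS
    have h4 : η * |x y| ≤ η * |x y + t * bE x c y y| + η * |t * bE x c y y| := by
      have h := mul_le_mul_of_nonneg_left (habs1 (x y) (t * bE x c y y)) hη0.le
      rw [mul_add] at h
      exact h
    have h5 : η * |t * bE x c y y| ≤ η * (3*K*t) :=
      mul_le_mul_of_nonneg_left (hO y y) hη0.le
    linarith
  have hxu := hsmallstep u S1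
  have hxv := hsmallstep v S2
  -- bE off-corner entries small : η * |bE u v| ≤ 252 K^2 t
  have hBstep : ∀ i j : Fin 4, η * |t * bE x c i j| ≤ 28*(3*K*t)^2 →
      η * |bE x c i j| ≤ 252*K^2*t := by
    intro i j hS
    have h1 : η * (t * |bE x c i j|) ≤ 252*K^2*t^2 := by
      rw [show t * |bE x c i j| = |t * bE x c i j| by rw [abs_mul, abs_of_nonneg ht0.le]]
      calc η * |t * bE x c i j| ≤ 28*(3*K*t)^2 := hS
        _ = 252*K^2*t^2 := by ring
    have h2 : (η * |bE x c i j|) * t ≤ (252*K^2*t) * t := by nlinarith [h1]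
    exact le_of_mul_le_mul_right h2 ht0
  have hBuv := hBstep u v S3
  have hBvu := hBstep v u S4
  -- expansions
  have hexp_u : bE x c u v = x p * c u p v + x a * c u a v + x u * c u u v :=
    bE_expand x c u v p a u (Ne.symm hpv) (Ne.symm hav) (Ne.symm huv) hpa hpu hau
  have hexp_v : bE x c v u = x p * c v p u + x a * c v a u + x v * c v v u :=
    bE_expand x c v u p a v (Ne.symm hpu) (Ne.symm hau) huv hpa hpv hav
  rw [hxp] at hexp_u hexp_v
  -- linear relations
  have hL1 : η * |c u p v + x a * c u a v| ≤ 252*K^2*t + (28*(3*K*t)^2 + 3*K*t*η)*K := by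
    have heq : c u p v + x a * c u a v = bE x c u v - x u * c u u v := by
      linear_combination -hexp_u
    rw [heq]
    have h1 : |bE x c u v - x u * c u u v| ≤ |bE x c u v| + |x u| * K :=
      asub (le_refl _) (amul (le_refl _) (hK u u v))
    have h2 : η * |bE x c u v - x u * c u u v| ≤ η * |bE x c u v| + η * (|x u| * K) := by
      have h := mul_le_mul_of_nonneg_left h1 hη0.le
      rw [mul_add] at h
      exact h
    have h3 : η * (|x u| * K) ≤ (28*(3*K*t)^2 + 3*K*t*η)*K := by
      have := mul_le_mul_of_nonneg_right hxu (by linarith : (0:ℝ) ≤ K)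
      calc η * (|x u| * K) = (η * |x u|) * K := by ring
        _ ≤ (28*(3*K*t)^2 + 3*K*t*η)*K := this
    linarith
  have hL2 : η * |c v p u + x a * c v a u| ≤ 252*K^2*t + (28*(3*K*t)^2 + 3*K*t*η)*K := by
    have heq : c v p u + x a * c v a u = bE x c v u - x v * c v v u := by
      linear_combination -hexp_v
    rw [heq]
    have h1 : |bE x c v u - x v * c v v u| ≤ |bE x c v u| + |x v| * K :=
      asub (le_refl _) (amul (le_refl _) (hK v v u))
    have h2 : η * |bE x c v u - x v * c v v u| ≤ η * |bE x c v u| + η * (|x v| * K) := by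
      have h := mul_le_mul_of_nonneg_left h1 hη0.le
      rw [mul_add] at h
      exact h
    have h3 : η * (|x v| * K) ≤ (28*(3*K*t)^2 + 3*K*t*η)*K := by
      have := mul_le_mul_of_nonneg_right hxv (by linarith : (0:ℝ) ≤ K)
      calc η * (|x v| * K) = (η * |x v|) * K := by ring
        _ ≤ (28*(3*K*t)^2 + 3*K*t*η)*K := this
    linarith
  -- combine into the determinant condition
  have hD : |c u p v * c v a u - c v p u * c u a v|
      ≤ |c u p v + x a * c u a v| * K + |c v p u + x a * c v a u| * K := by
    have heq : c u p v * c v a u - c v p u * c u a v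
        = (c u p v + x a * c u a v) * c v a u - (c v p u + x a * c v a u) * c u a v := by
      ring
    rw [heq]
    exact asub (amul (le_refl _) (hK v a u)) (amul (le_refl _) (hK u a v))
  -- final contradiction
  have hfin : η * Dm ≤ η * |c u p v * c v a u - c v p u * c u a v| :=
    mul_le_mul_of_nonneg_left hDm hη0.le
  have hKnn : (0:ℝ) ≤ K := hK0.le
  have hbig : η * |c u p v * c v a u - c v p u * c u a v| ≤ 600*K^3*t := by
    have h1 : η * (|c u p v + x a * c u a v| * K)
        ≤ (252*K^2*t + (28*(3*K*t)^2 + 3*K*t*η)*K)*K := by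
      calc η * (|c u p v + x a * c u a v| * K) = (η * |c u p v + x a * c u a v|) * K := by ring
        _ ≤ (252*K^2*t + (28*(3*K*t)^2 + 3*K*t*η)*K)*K := mul_le_mul_of_nonneg_right hL1 hKnn
    have h2 : η * (|c v p u + x a * c v a u| * K)
        ≤ (252*K^2*t + (28*(3*K*t)^2 + 3*K*t*η)*K)*K := by
      calc η * (|c v p u + x a * c v a u| * K) = (η * |c v p u + x a * c v a u|) * K := by ring
        _ ≤ (252*K^2*t + (28*(3*K*t)^2 + 3*K*t*η)*K)*K := mul_le_mul_of_nonneg_right hL2 hKnn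
    have h3 : η * |c u p v * c v a u - c v p u * c u a v|
        ≤ η * (|c u p v + x a * c u a v| * K) + η * (|c v p u + x a * c v a u| * K) := by
      have h := mul_le_mul_of_nonneg_left hD hη0.le
      rw [mul_add] at h
      exact h
    have hq : 504*K^4*t^2 ≤ 84*K^3*t := by
      have hh := mul_le_mul_of_nonneg_left ht1 (show (0:ℝ) ≤ 84*K^3*t by positivity)
      nlinarith [hh]
    have hq2 : 6*K^3*t*η ≤ 6*K^3*t := by
      have hh := mul_le_mul_of_nonneg_left hη1 (show (0:ℝ) ≤ 6*K^3*t by positivity)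
      nlinarith [hh]
    have hpos : (0:ℝ) ≤ K^3*t := by positivity
    linarith [h1, h2, h3, hq, hq2, hpos]
  linarith

lemma stepB {dp nxu nxv nyu nyv opu opv oxp oyp w2 wc wη : ℝ}
    (E : dp*(nxu*nyv - nxv*nyu)
      = opu*oxp*nyv - opu*nxv*oyp - opv*oxp*nyu + opv*nxu*oyp)
    (hdp : 1/2 ≤ |dp|)
    (h1 : |nxu| ≤ w2) (h2 : |nxv| ≤ w2) (h3 : |nyu| ≤ w2) (h4 : |nyv| ≤ w2)
    (h5 : |opu| ≤ wc) (h6 : |opv| ≤ wc) (h7 : |oxp| ≤ wη) (h8 : |oyp| ≤ wη) :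
    |nxu*nyv - nxv*nyu| ≤ 8*wc*wη*w2 := by
  have hR : |opu*oxp*nyv - opu*nxv*oyp - opv*oxp*nyu + opv*nxu*oyp|
      ≤ wc*wη*w2 + wc*w2*wη + wc*wη*w2 + wc*w2*wη :=
    aadd (asub (asub (amul3 h5 h7 h4) (amul3 h5 h2 h8)) (amul3 h6 h7 h3)) (amul3 h6 h1 h8)
  have hL : 1/2 * |nxu*nyv - nxv*nyu| ≤ |dp * (nxu*nyv - nxv*nyu)| := by
    rw [abs_mul]
    exact mul_le_mul_of_nonneg_right hdp (abs_nonneg _)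
  rw [E] at hL
  nlinarith [hL, hR, abs_nonneg (nxu*nyv - nxv*nyu)]

lemma abs_le_abs_add_abs_sub (a b : ℝ) : |a| ≤ |b| + |a - b| := by
  have h := abs_sub_abs_le_abs_sub a b
  linarith [abs_nonneg (a-b)]

lemma prod3_diff {b1 b2 b3 c1 c2 c3 K η : ℝ}
    (hb1 : |b1 - c1| ≤ 2*K*η) (hb2 : |b2 - c2| ≤ 2*K*η) (hb3 : |b3 - c3| ≤ 2*K*η)
    (hc1 : |c1| ≤ K) (hc2 : |c2| ≤ K) (hc3 : |c3| ≤ K)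
    (hη0 : 0 ≤ η) (hη12 : η ≤ 1/2) (hK0 : 0 ≤ K) :
    |b1*b2*b3 - c1*c2*c3| ≤ 14*K^3*η := by
  have hb1' : |b1| ≤ 2*K := by
    have h := abs_le_abs_add_abs_sub b1 c1
    nlinarith [h, hb1, hc1]
  have hb2' : |b2| ≤ 2*K := by
    have h := abs_le_abs_add_abs_sub b2 c2
    nlinarith [h, hb2, hc2]
  have hb3' : |b3| ≤ 2*K := by
    have h := abs_le_abs_add_abs_sub b3 c3
    nlinarith [h, hb3, hc3]
  have heq : b1*b2*b3 - c1*c2*c3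
      = (b1-c1)*b2*b3 + c1*((b2-c2)*b3) + c1*c2*(b3-c3) := by ring
  rw [heq]
  have h1 : |(b1-c1)*b2*b3| ≤ (2*K*η)*(2*K)*(2*K) := amul3 hb1 hb2' hb3'
  have h2 : |c1*((b2-c2)*b3)| ≤ K*((2*K*η)*(2*K)) := amul hc1 (amul hb2 hb3')
  have h3 : |c1*c2*(b3-c3)| ≤ K*K*(2*K*η) := amul3 hc1 hc2 hb3
  have h4 := aadd (aadd h1 h2) h3
  nlinarith [h4]

set_option maxHeartbeats 2000000 in
lemma caseB {c : Fin 4 → Fin 4 → Fin 4 → ℝ} {K t η Gm : ℝ}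
    (hK1 : 1 ≤ K) (hK : ∀ i k j, |c i k j| ≤ K)
    {p q r s : Fin 4} (hpq : p ≠ q) (hpr : p ≠ r) (hps : p ≠ s)
    (hqr : q ≠ r) (hqs : q ≠ s) (hrs : r ≠ s)
    {x : Fin 4 → ℝ} (hxp : x p = 1) (hx : ∀ k, |x k| ≤ 1) (hsm : ∀ k, k ≠ p → |x k| ≤ η)
    (hG : Gm ≤ |c q p s * c s p r * c r p q - c s p q * c r p s * c q p r|)
    (hη0 : 0 < η) (hη12 : η ≤ 1/2) (hη2 : 56*K^3*η ≤ Gm) (hη3 : 3456*K^3*η^2 ≤ Gm)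
    (ht0 : 0 < t) (ht1 : 6*K*t ≤ 1) (ht4 : 10368*K^4*η*t < Gm)
    (hm : ∀ r0 r1 r2 c0 c1 c2, minorExpr (ME x c t) r0 r1 r2 c0 c1 c2 = 0) : False := by
  have hK0 : (0:ℝ) < K := lt_of_lt_of_le one_pos hK1
  have hB : ∀ i j, |bE x c i j| ≤ 3*K := bE_bound hx hK
  have hO : ∀ i j, |t * bE x c i j| ≤ 3*K*t := by
    intro i j
    calc |t * bE x c i j| = t * |bE x c i j| := by rw [abs_mul, abs_of_nonneg ht0.le]
      _ ≤ t * (3*K) := mul_le_mul_of_nonneg_left (hB i j) ht0.le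
      _ = 3*K*t := by ring
  have hOcol : ∀ i, |t * bE x c i p| ≤ 3*K*η*t := by
    intro i
    calc |t * bE x c i p| = t * |bE x c i p| := by rw [abs_mul, abs_of_nonneg ht0.le]
      _ ≤ t * (3*K*η) := mul_le_mul_of_nonneg_left (bE_bound_col hη0.le hsm hK i) ht0.le
      _ = 3*K*η*t := by ring
  have hw1 : 3*K*t ≤ 1/2 := by linarith
  have habs1 : ∀ y B : ℝ, |y| ≤ |y + B| + |B| := by
    intro y B
    have h := abs_sub (y + B) B
    simpa using h
  have hdp1 : 1/2 ≤ |1 + t * bE x c p p| := by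
    have h := habs1 1 (t * bE x c p p)
    have := hO p p
    simp only [abs_one] at h
    linarith
  have hnd : ∀ y : Fin 4, y ≠ p → |x y + t * bE x c y y| ≤ η + 3*K*t := by
    intro y hy
    exact aadd (hsm y hy) (hO y y)
  have hno : ∀ y z : Fin 4, |t * bE x c y z| ≤ η + 3*K*t := by
    intro y z
    have := hO y z
    linarith
  -- the four minor equations
  have m1 := hm p q r p r s
  have m2 := hm p r s p r q
  have m3 := hm p s q p s r
  have m4 := hm p s r p s q
  simp only [minorExpr, ME, if_neg hpq, if_neg hpr, if_neg hps, if_neg hqr, if_neg hqs,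
    if_neg hrs, if_neg (Ne.symm hpq), if_neg (Ne.symm hpr), if_neg (Ne.symm hps),
    if_neg (Ne.symm hqr), if_neg (Ne.symm hqs), if_neg (Ne.symm hrs),
    eq_self_iff_true, if_true, hxp, zero_add] at m1 m2 m3 m4
  -- normalized equations
  have E1 : (1 + t * bE x c p p) * ((t * bE x c q r)*(t * bE x c r s)
        - (t * bE x c q s)*(x r + t * bE x c r r))
      = (t * bE x c p r)*(t * bE x c q p)*(t * bE x c r s)
        - (t * bE x c p r)*(t * bE x c q s)*(t * bE x c r p)
        - (t * bE x c p s)*(t * bE x c q p)*(x r + t * bE x c r r)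
        + (t * bE x c p s)*(t * bE x c q r)*(t * bE x c r p) := by
    linear_combination m1
  have E2 : (1 + t * bE x c p p) * ((x r + t * bE x c r r)*(t * bE x c s q)
        - (t * bE x c r q)*(t * bE x c s r))
      = (t * bE x c p r)*(t * bE x c r p)*(t * bE x c s q)
        - (t * bE x c p r)*(t * bE x c r q)*(t * bE x c s p)
        - (t * bE x c p q)*(t * bE x c r p)*(t * bE x c s r)
        + (t * bE x c p q)*(x r + t * bE x c r r)*(t * bE x c s p) := by
    linear_combination m2
  have E3 : (1 + t * bE x c p p) * ((x s + t * bE x c s s)*(t * bE x c q r)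
        - (t * bE x c s r)*(t * bE x c q s))
      = (t * bE x c p s)*(t * bE x c s p)*(t * bE x c q r)
        - (t * bE x c p s)*(t * bE x c s r)*(t * bE x c q p)
        - (t * bE x c p r)*(t * bE x c s p)*(t * bE x c q s)
        + (t * bE x c p r)*(x s + t * bE x c s s)*(t * bE x c q p) := by
    linear_combination m3
  have E4 : (1 + t * bE x c p p) * ((x s + t * bE x c s s)*(t * bE x c r q)
        - (t * bE x c s q)*(t * bE x c r s))
      = (t * bE x c p s)*(t * bE x c s p)*(t * bE x c r q)
        - (t * bE x c p s)*(t * bE x c s q)*(t * bE x c r p)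
        - (t * bE x c p q)*(t * bE x c s p)*(t * bE x c r s)
        + (t * bE x c p q)*(x s + t * bE x c s s)*(t * bE x c r p) := by
    linear_combination m4
  have M1 := stepB E1 hdp1 (hno q r) (hno q s) (hnd r (Ne.symm hpr)) (hno r s)
    (hO p r) (hO p s) (hOcol q) (hOcol r)
  have M2 := stepB E2 hdp1 (hnd r (Ne.symm hpr)) (hno r q) (hno s r) (hno s q)
    (hO p r) (hO p q) (hOcol r) (hOcol s)
  have M3 := stepB E3 hdp1 (hnd s (Ne.symm hps)) (hno s r) (hno q s) (hno q r)
    (hO p s) (hO p r) (hOcol s) (hOcol q)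
  have M4 := stepB E4 hdp1 (hnd s (Ne.symm hps)) (hno s q) (hno r s) (hno r q)
    (hO p s) (hO p q) (hOcol s) (hOcol r)
  clear m1 m2 m3 m4 E1 E2 E3 E4 hm
  -- the cyclic identity bound
  have hEm : (0:ℝ) ≤ 8*(3*K*t)*(3*K*η*t)*(η + 3*K*t) := by positivity
  have hid : 2*((t * bE x c q r)*(t * bE x c r s)*(t * bE x c s q)
        - (t * bE x c q s)*(t * bE x c s r)*(t * bE x c r q))
      = (t * bE x c s q)*((t * bE x c q r)*(t * bE x c r s)
          - (t * bE x c q s)*(x r + t * bE x c r r))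
        + (t * bE x c q s)*((x r + t * bE x c r r)*(t * bE x c s q)
          - (t * bE x c r q)*(t * bE x c s r))
        + (t * bE x c r q)*((x s + t * bE x c s s)*(t * bE x c q r)
          - (t * bE x c s r)*(t * bE x c q s))
        - (t * bE x c q r)*((x s + t * bE x c s s)*(t * bE x c r q)
          - (t * bE x c s q)*(t * bE x c r s)) := by
    ring
  have hPP : |2*((t * bE x c q r)*(t * bE x c r s)*(t * bE x c s q)
        - (t * bE x c q s)*(t * bE x c s r)*(t * bE x c r q))|
      ≤ (3*K*t)*(8*(3*K*t)*(3*K*η*t)*(η + 3*K*t)) + (3*K*t)*(8*(3*K*t)*(3*K*η*t)*(η + 3*K*t))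
        + (3*K*t)*(8*(3*K*t)*(3*K*η*t)*(η + 3*K*t)) + (3*K*t)*(8*(3*K*t)*(3*K*η*t)*(η + 3*K*t)) := by
    rw [hid]
    exact asub (aadd (aadd (amul (hO s q) M1) (amul (hO q s) M2)) (amul (hO r q) M3))
      (amul (hO q r) M4)
  -- rewrite in terms of W
  have hPW : (t * bE x c q r)*(t * bE x c r s)*(t * bE x c s q)
        - (t * bE x c q s)*(t * bE x c s r)*(t * bE x c r q)
      = t^3 * (bE x c q r * bE x c r s * bE x c s q
        - bE x c q s * bE x c s r * bE x c r q) := by ring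
  rw [hPW] at hPP
  -- expansions: bE entries close to c · p ·
  have hce : ∀ y z w1 w2 : Fin 4, z ≠ p → z ≠ w1 → z ≠ w2 → p ≠ w1 → p ≠ w2 → w1 ≠ w2 →
      w1 ≠ p → w2 ≠ p → |bE x c y z - c y p z| ≤ 2*K*η := by
    intro y z w1 w2 h1 h2 h3 h4 h5 h6 h7 h8
    have hexp := bE_expand x c y z p w1 w2 h1 h2 h3 h4 h5 h6
    rw [hxp] at hexp
    have heq : bE x c y z - c y p z = x w1 * c y w1 z + x w2 * c y w2 z := by
      linear_combination hexp
    rw [heq]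
    have := aadd (amul (hsm w1 h7) (hK y w1 z)) (amul (hsm w2 h8) (hK y w2 z))
    calc |x w1 * c y w1 z + x w2 * c y w2 z| ≤ η*K + η*K := this
      _ = 2*K*η := by ring
  have hd1 : |bE x c q r - c q p r| ≤ 2*K*η :=
    hce q r q s (Ne.symm hpr) (Ne.symm hqr) hrs hpq hps hqs (Ne.symm hpq) (Ne.symm hps)
  have hd2 : |bE x c r s - c r p s| ≤ 2*K*η :=
    hce r s q r (Ne.symm hps) (Ne.symm hqs) (Ne.symm hrs) hpq hpr hqr (Ne.symm hpq) (Ne.symm hpr)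
  have hd3 : |bE x c s q - c s p q| ≤ 2*K*η :=
    hce s q r s (Ne.symm hpq) hqr hqs hpr hps hrs (Ne.symm hpr) (Ne.symm hps)
  have hd4 : |bE x c q s - c q p s| ≤ 2*K*η :=
    hce q s q r (Ne.symm hps) (Ne.symm hqs) (Ne.symm hrs) hpq hpr hqr (Ne.symm hpq) (Ne.symm hpr)
  have hd5 : |bE x c s r - c s p r| ≤ 2*K*η :=
    hce s r q s (Ne.symm hpr) (Ne.symm hqr) hrs hpq hps hqs (Ne.symm hpq) (Ne.symm hps)
  have hd6 : |bE x c r q - c r p q| ≤ 2*K*η :=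
    hce r q r s (Ne.symm hpq) hqr hqs hpr hps hrs (Ne.symm hpr) (Ne.symm hps)
  have hp1 : |bE x c q r * bE x c r s * bE x c s q - c q p r * c r p s * c s p q| ≤ 14*K^3*η :=
    prod3_diff hd1 hd2 hd3 (hK q p r) (hK r p s) (hK s p q) hη0.le hη12 hK0.le
  have hp2 : |bE x c q s * bE x c s r * bE x c r q - c q p s * c s p r * c r p q| ≤ 14*K^3*η :=
    prod3_diff hd4 hd5 hd6 (hK q p s) (hK s p r) (hK r p q) hη0.le hη12 hK0.le
  have hWdiff : |(bE x c q r * bE x c r s * bE x c s q - bE x c q s * bE x c s r * bE x c r q)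
      - (c q p r * c r p s * c s p q - c q p s * c s p r * c r p q)| ≤ 14*K^3*η + 14*K^3*η := by
    have heq : (bE x c q r * bE x c r s * bE x c s q - bE x c q s * bE x c s r * bE x c r q)
        - (c q p r * c r p s * c s p q - c q p s * c s p r * c r p q)
        = (bE x c q r * bE x c r s * bE x c s q - c q p r * c r p s * c s p q)
          - (bE x c q s * bE x c s r * bE x c r q - c q p s * c s p r * c r p q) := by ring
    rw [heq]
    exact asub hp1 hp2
  -- Gm lower bound on |W|
  have hGW : Gm ≤ |c q p r * c r p s * c s p q - c q p s * c s p r * c r p q| := by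
    have heq : c q p s * c s p r * c r p q - c s p q * c r p s * c q p r
        = -(c q p r * c r p s * c s p q - c q p s * c s p r * c r p q) := by ring
    rw [heq, abs_neg] at hG
    exact hG
  have hWlow : Gm - 28*K^3*η ≤ |bE x c q r * bE x c r s * bE x c s q
      - bE x c q s * bE x c s r * bE x c r q| := by
    have h := abs_le_abs_add_abs_sub
      (c q p r * c r p s * c s p q - c q p s * c s p r * c r p q)
      (bE x c q r * bE x c r s * bE x c s q - bE x c q s * bE x c s r * bE x c r q)
    have h2 : |(c q p r * c r p s * c s p q - c q p s * c s p r * c r p q)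
        - (bE x c q r * bE x c r s * bE x c s q - bE x c q s * bE x c s r * bE x c r q)|
        ≤ 28*K^3*η := by
      rw [abs_sub_comm]
      linarith [hWdiff]
    linarith
  -- conclude
  have hW3 : |t^3 * (bE x c q r * bE x c r s * bE x c s q
      - bE x c q s * bE x c s r * bE x c r q)|
      = t^3 * |bE x c q r * bE x c r s * bE x c s q - bE x c q s * bE x c s r * bE x c r q| := by
    rw [abs_mul, abs_pow, abs_of_nonneg ht0.le]
  have hPP2 : 2 * (t^3 * |bE x c q r * bE x c r s * bE x c s q
      - bE x c q s * bE x c s r * bE x c r q|) ≤ 4*((3*K*t)*(8*(3*K*t)*(3*K*η*t)*(η + 3*K*t))) := by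
    have h := hPP
    rw [abs_mul, hW3] at h
    simp only [abs_two] at h
    linarith
  have hfin : (Gm - 28*K^3*η) * t^3 ≤ (432*K^3*η^2 + 1296*K^4*η*t) * t^3 := by
    have h1 : (Gm - 28*K^3*η) * t^3 ≤ |bE x c q r * bE x c r s * bE x c s q
        - bE x c q s * bE x c s r * bE x c r q| * t^3 :=
      mul_le_mul_of_nonneg_right hWlow (by positivity)
    have h2 : 2*((3*K*t)*(8*(3*K*t)*(3*K*η*t)*(η + 3*K*t))) = (432*K^3*η^2 + 1296*K^4*η*t) * t^3 := by
      ring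
    nlinarith [h1, hPP2]
  have hdiv : Gm - 28*K^3*η ≤ 432*K^3*η^2 + 1296*K^4*η*t :=
    le_of_mul_le_mul_right hfin (by positivity)
  have hGm0 : 0 < Gm := by nlinarith [hη2, mul_pos (mul_pos hK0 (mul_pos hK0 hK0)) hη0]
  linarith

lemma complete4 : ∀ p a : Fin 4, p ≠ a → ∃ u v : Fin 4,
    p ≠ u ∧ p ≠ v ∧ a ≠ u ∧ a ≠ v ∧ u ≠ v := by decide

lemma fin4cases : ∀ z : Fin 4, z = 0 ∨ z = 1 ∨ z = 2 ∨ z = 3 := by decide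

end Stmt4Aux


set_option maxHeartbeats 4000000 in
open Stmt4Aux in
/-- In the indexing below, the indices 1,2,3,4 of the paper correspond to
`0,1,2,3 : Fin 4`, and `c i k j` denotes `c_i^{kj}`. -/
theorem stmt4 (c : Fin 4 → Fin 4 → Fin 4 → ℝ) (hc : IsParamColl 4 c)
    (h1 : ∀ i j k l : Fin 4, i ≠ j → k ≠ l → k ≠ i → k ≠ j → l ≠ i → l ≠ j →
      c j i k * c i j l ≠ c j i l * c i j k)
    (h2 : c 1 0 3 * c 3 0 2 * c 2 0 1 ≠ c 3 0 1 * c 2 0 3 * c 1 0 2)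
    (h3 : c 3 1 0 * c 2 1 3 * c 0 1 2 ≠ c 0 1 3 * c 3 1 2 * c 2 1 0)
    (h4 : c 3 2 0 * c 1 2 3 * c 0 2 1 ≠ c 0 2 3 * c 3 2 1 * c 1 2 0)
    (h5 : c 1 3 0 * c 0 3 2 * c 2 3 1 ≠ c 0 3 1 * c 2 3 0 * c 1 3 2) :
    ∃ T > (0 : ℝ), ∀ t : ℝ, 0 < t → t < T →
      ∀ ξ : Fin 4 → ℝ, ξ ≠ 0 → 3 ≤ (pSymb ξ (pScale t c)).rank := by
  classical
  obtain ⟨hsym, hone, hzero⟩ := hc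
  -- the bound K
  set K : ℝ := 1 + ∑ i, ∑ k, ∑ j, |c i k j| with hKdef
  have hsum_nn : (0:ℝ) ≤ ∑ i, ∑ k, ∑ j, |c i k j| :=
    Finset.sum_nonneg fun _ _ => Finset.sum_nonneg fun _ _ =>
      Finset.sum_nonneg fun _ _ => abs_nonneg _
  have hK1 : 1 ≤ K := by rw [hKdef]; linarith
  have hK0 : (0:ℝ) < K := lt_of_lt_of_le one_pos hK1
  have hK : ∀ i k j, |c i k j| ≤ K := by
    intro i k j
    have hA : |c i k j| ≤ ∑ j', |c i k j'| :=
      Finset.single_le_sum (f := fun j' => |c i k j'|)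
        (fun _ _ => abs_nonneg _) (Finset.mem_univ j)
    have hB : (∑ j', |c i k j'|) ≤ ∑ k', ∑ j', |c i k' j'| :=
      Finset.single_le_sum (f := fun k' => ∑ j', |c i k' j'|)
        (fun _ _ => Finset.sum_nonneg fun _ _ => abs_nonneg _) (Finset.mem_univ k)
    have hC : (∑ k', ∑ j', |c i k' j'|) ≤ ∑ i', ∑ k', ∑ j', |c i' k' j'| :=
      Finset.single_le_sum (f := fun i' => ∑ k', ∑ j', |c i' k' j'|)
        (fun _ _ => Finset.sum_nonneg fun _ _ => Finset.sum_nonneg fun _ _ => abs_nonneg _)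
        (Finset.mem_univ i)
    rw [hKdef]; linarith
  -- the pairwise determinant bound Dm
  set S : Finset (Fin 4 × Fin 4 × Fin 4 × Fin 4) :=
    Finset.univ.filter (fun w => w.1 ≠ w.2.1 ∧ w.1 ≠ w.2.2.1 ∧ w.1 ≠ w.2.2.2 ∧
      w.2.1 ≠ w.2.2.1 ∧ w.2.1 ≠ w.2.2.2 ∧ w.2.2.1 ≠ w.2.2.2) with hSdef
  have hSne : S.Nonempty := ⟨(0, 1, 2, 3), by decide⟩
  set fD : Fin 4 × Fin 4 × Fin 4 × Fin 4 → ℝ := fun w =>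
    |c w.2.2.1 w.1 w.2.2.2 * c w.2.2.2 w.2.1 w.2.2.1
      - c w.2.2.2 w.1 w.2.2.1 * c w.2.2.1 w.2.1 w.2.2.2| with hfDdef
  set Dm : ℝ := S.inf' hSne fD with hDmdef
  have hDm_le : ∀ p a u v : Fin 4, p ≠ a → p ≠ u → p ≠ v → a ≠ u → a ≠ v → u ≠ v →
      Dm ≤ |c u p v * c v a u - c v p u * c u a v| := by
    intro p a u v d1 d2 d3 d4 d5 d6
    have hmem : (p, a, u, v) ∈ S := by
      rw [hSdef]
      simp only [Finset.mem_filter, Finset.mem_univ, true_and]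
      exact ⟨d1, d2, d3, d4, d5, d6⟩
    exact Finset.inf'_le fD hmem
  have hDm0 : 0 < Dm := by
    rw [hDmdef]
    rw [Finset.lt_inf'_iff]
    rintro ⟨p, a, u, v⟩ hmem
    rw [hSdef] at hmem
    simp only [Finset.mem_filter, Finset.mem_univ, true_and] at hmem
    obtain ⟨d1, d2, d3, d4, d5, d6⟩ := hmem
    show (0:ℝ) < |c u p v * c v a u - c v p u * c u a v|
    rw [abs_pos, sub_ne_zero]
    have h := h1 v u p a (Ne.symm d6) d1 d3 d2 d5 d4
    -- h : c u v p * c v u a ≠ c u v a * c v u p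
    rw [hsym u p v d3, hsym v a u d4, hsym u a v d5, hsym v p u d2] at h
    intro heq
    exact h (by linear_combination heq)
  -- the cyclic gaps
  set g0 : ℝ := |c 1 0 3 * c 3 0 2 * c 2 0 1 - c 3 0 1 * c 2 0 3 * c 1 0 2| with hg0
  set g1 : ℝ := |c 3 1 0 * c 0 1 2 * c 2 1 3 - c 0 1 3 * c 2 1 0 * c 3 1 2| with hg1
  set g2 : ℝ := |c 3 2 0 * c 0 2 1 * c 1 2 3 - c 0 2 3 * c 1 2 0 * c 3 2 1| with hg2
  set g3 : ℝ := |c 1 3 0 * c 0 3 2 * c 2 3 1 - c 0 3 1 * c 2 3 0 * c 1 3 2| with hg3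
  have hg0p : 0 < g0 := by
    rw [hg0, abs_pos, sub_ne_zero]; exact h2
  have hg1p : 0 < g1 := by
    rw [hg1, abs_pos, sub_ne_zero]
    intro heq; exact h3 (by linear_combination heq)
  have hg2p : 0 < g2 := by
    rw [hg2, abs_pos, sub_ne_zero]
    intro heq; exact h4 (by linear_combination heq)
  have hg3p : 0 < g3 := by
    rw [hg3, abs_pos, sub_ne_zero]; exact h5
  set Gm : ℝ := min (min g0 g1) (min g2 g3) with hGmdef
  have hGm0 : 0 < Gm := by
    rw [hGmdef]
    exact lt_min (lt_min hg0p hg1p) (lt_min hg2p hg3p)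
  -- the threshold η
  set η : ℝ := min (1/2) (min (Gm/(56*K^3)) (Real.sqrt (Gm/(3456*K^3)))) with hηdef
  have hη0 : 0 < η := by
    rw [hηdef]
    refine lt_min one_half_pos (lt_min (by positivity) (Real.sqrt_pos.mpr (by positivity)))
  have hη12 : η ≤ 1/2 := min_le_left _ _
  have hη2 : 56*K^3*η ≤ Gm := by
    have h' : η ≤ Gm/(56*K^3) := (min_le_right _ _).trans (min_le_left _ _)
    rw [le_div_iff₀ (by positivity : (0:ℝ) < 56*K^3)] at h'
    linarith
  have hη3 : 3456*K^3*η^2 ≤ Gm := by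
    have h' : η ≤ Real.sqrt (Gm/(3456*K^3)) := (min_le_right _ _).trans (min_le_right _ _)
    have hsq : η^2 ≤ Gm/(3456*K^3) := by
      have := pow_le_pow_left₀ hη0.le h' 2
      rwa [Real.sq_sqrt (by positivity : (0:ℝ) ≤ Gm/(3456*K^3))] at this
    rw [le_div_iff₀ (by positivity : (0:ℝ) < 3456*K^3)] at hsq
    linarith
  -- the time threshold T
  refine ⟨min (min (1/(6*K)) (η/(6*K))) (min (η*Dm/(600*K^3)) (Gm/(10368*K^4*η))), ?_, ?_⟩
  · positivity
  intro t ht0 htT ξ hξ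
  by_contra hr
  push_neg at hr
  have hrank : (pSymb ξ (pScale t c)).rank ≤ 2 := by omega
  -- t bounds
  have ht1 : 6*K*t ≤ 1 := by
    have h := htT.trans_le ((min_le_left _ _).trans (min_le_left _ _))
    rw [lt_div_iff₀ (by positivity : (0:ℝ) < 6*K)] at h
    linarith
  have ht2 : 6*K*t ≤ η := by
    have h := htT.trans_le ((min_le_left _ _).trans (min_le_right _ _))
    rw [lt_div_iff₀ (by positivity : (0:ℝ) < 6*K)] at h
    linarith
  have ht3 : 600*K^3*t < η*Dm := by
    have h := htT.trans_le ((min_le_right _ _).trans (min_le_left _ _))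
    rw [lt_div_iff₀ (by positivity : (0:ℝ) < 600*K^3)] at h
    linarith
  have ht4 : 10368*K^4*η*t < Gm := by
    have h := htT.trans_le ((min_le_right _ _).trans (min_le_right _ _))
    rw [lt_div_iff₀ (by positivity : (0:ℝ) < 10368*K^4*η)] at h
    linarith
  -- pivot
  obtain ⟨p, -, hp'⟩ := Finset.exists_max_image Finset.univ (fun i => |ξ i|)
    ⟨0, Finset.mem_univ 0⟩
  have hp : ∀ j, |ξ j| ≤ |ξ p| := fun j => hp' j (Finset.mem_univ j)
  have hξp : ξ p ≠ 0 := by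
    intro h0
    apply hξ
    funext j
    have := hp j
    rw [h0, abs_zero] at this
    exact abs_nonpos_iff.mp this
  set x : Fin 4 → ℝ := (ξ p)⁻¹ • ξ with hxdef
  have hxp : x p = 1 := by
    rw [hxdef]
    simp [inv_mul_cancel₀ hξp]
  have hxk : ∀ k, x k = ξ k / ξ p := by
    intro k
    rw [hxdef]
    simp [div_eq_inv_mul]
  have hx : ∀ k, |x k| ≤ 1 := by
    intro k
    rw [hxk k, abs_div]
    exact (div_le_one (abs_pos.mpr hξp)).mpr (hp k)
  have hsmul : pSymb x (pScale t c) = (ξ p)⁻¹ • pSymb ξ (pScale t c) := by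
    ext i j
    show (∑ k, x k * pScale t c i k j) = (ξ p)⁻¹ * ∑ k, ξ k * pScale t c i k j
    rw [Finset.mul_sum]
    refine Finset.sum_congr rfl fun k _ => ?_
    rw [hxdef]
    simp [mul_assoc]
  have hrank2 : (pSymb x (pScale t c)).rank ≤ 2 := by
    rw [hsmul, rank_smul_eq _ (inv_ne_zero hξp)]
    exact hrank
  have hm : ∀ r0 r1 r2 c0 c1 c2, minorExpr (ME x c t) r0 r1 r2 c0 c1 c2 = 0 := by
    intro r0 r1 r2 c0 c1 c2
    have h := minor_eq_zero hrank2 r0 r1 r2 c0 c1 c2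
    rwa [show (fun i j => pSymb x (pScale t c) i j) = ME x c t from
      funext fun i => funext fun j => entry_eq ⟨hsym, hone, hzero⟩ x t i j] at h
  -- case split
  by_cases hcase : ∃ j, j ≠ p ∧ η ≤ |x j|
  · obtain ⟨a, hap, hηa⟩ := hcase
    obtain ⟨u, v, hpu, hpv, hau, hav, huv⟩ := complete4 p a (Ne.symm hap)
    exact caseA hK1 hK (Ne.symm hap) hpu hpv hau hav huv hxp hx hηa
      (hDm_le p a u v (Ne.symm hap) hpu hpv hau hav huv) hη0 (by linarith) ht0 ht1 ht2 ht3 hm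
  · push_neg at hcase
    have hsm : ∀ k, k ≠ p → |x k| ≤ η := fun k h => (hcase k h).le
    rcases fin4cases p with rfl | rfl | rfl | rfl
    · refine caseB hK1 hK (show (0:Fin 4) ≠ 1 by decide) (show (0:Fin 4) ≠ 2 by decide)
        (show (0:Fin 4) ≠ 3 by decide) (show (1:Fin 4) ≠ 2 by decide)
        (show (1:Fin 4) ≠ 3 by decide) (show (2:Fin 4) ≠ 3 by decide)
        hxp hx hsm ?_ hη0 hη12 hη2 hη3 ht0 ht1 ht4 hm
      have : Gm ≤ g0 := (min_le_left _ _).trans (min_le_left _ _)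
      rw [hg0] at this
      exact this
    · refine caseB hK1 hK (q := 3) (r := 2) (s := 0)
        (show (1:Fin 4) ≠ 3 by decide) (show (1:Fin 4) ≠ 2 by decide)
        (show (1:Fin 4) ≠ 0 by decide) (show (3:Fin 4) ≠ 2 by decide)
        (show (3:Fin 4) ≠ 0 by decide) (show (2:Fin 4) ≠ 0 by decide)
        hxp hx hsm ?_ hη0 hη12 hη2 hη3 ht0 ht1 ht4 hm
      have : Gm ≤ g1 := (min_le_left _ _).trans (min_le_right _ _)
      rw [hg1] at this
      exact this
    · refine caseB hK1 hK (q := 3) (r := 1) (s := 0)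
        (show (2:Fin 4) ≠ 3 by decide) (show (2:Fin 4) ≠ 1 by decide)
        (show (2:Fin 4) ≠ 0 by decide) (show (3:Fin 4) ≠ 1 by decide)
        (show (3:Fin 4) ≠ 0 by decide) (show (1:Fin 4) ≠ 0 by decide)
        hxp hx hsm ?_ hη0 hη12 hη2 hη3 ht0 ht1 ht4 hm
      have : Gm ≤ g2 := (min_le_right _ _).trans (min_le_left _ _)
      rw [hg2] at this
      exact this
    · refine caseB hK1 hK (q := 1) (r := 2) (s := 0)
        (show (3:Fin 4) ≠ 1 by decide) (show (3:Fin 4) ≠ 2 by decide)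
        (show (3:Fin 4) ≠ 0 by decide) (show (1:Fin 4) ≠ 2 by decide)
        (show (1:Fin 4) ≠ 0 by decide) (show (2:Fin 4) ≠ 0 by decide)
        hxp hx hsm ?_ hη0 hη12 hη2 hη3 ht0 ht1 ht4 hm
      have : Gm ≤ g3 := (min_le_right _ _).trans (min_le_right _ _)
      rw [hg3] at this
      exact this
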